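/- Let β, γ, δ, μ > 0 be real and a ∈ ℝ. Then the Riemann–Liouville fractional integral of order μ applied to t ↦ t^{γ-1} E^δ_{β,γ}(a t^β) equals t^{γ+μ-1} E^δ_{β,γ+μ}(a t^β): (₀D_t^{-μ})(u^{γ-1} E^δ_{β,γ}(a u^β))(t) = t^{γ+μ-1} E^δ_{β,γ+μ}(a t^β) for t > 0. -/

import Mathlib

open MeasureTheory Real Filter

/-- Prabhakar generalized Mittag-Leffler function (real argument). -/
noncomputable def prabhakar (β γ δ : ℝ) (z : ℝ) : ℝ :=
  ∑' τ : ℕ, (ascPochhammer ℝ τ).eval δ * z ^ τ /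
    (Real.Gamma (β * τ + γ) * (τ.factorial : ℝ))

/-- Riemann–Liouville fractional integral of order μ. -/
noncomputable def rlInt (μ : ℝ) (f : ℝ → ℝ) (t : ℝ) : ℝ :=
  (1 / Real.Gamma μ) * ∫ u in (0:ℝ)..t, (t - u) ^ (μ - 1) * f u

lemma beta_real {p q t : ℝ} (hp : 0 < p) (hq : 0 < q) (ht : 0 < t) :
    ∫ u in (0:ℝ)..t, u ^ (p-1) * (t - u) ^ (q-1) =
      t ^ (p+q-1) * (Real.Gamma p * Real.Gamma q / Real.Gamma (p+q)) := by
  have hB : Complex.betaIntegral p q =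
      ((Real.Gamma p * Real.Gamma q / Real.Gamma (p+q) : ℝ) : ℂ) := by
    have h1 := Complex.Gamma_mul_Gamma_eq_betaIntegral
      (s := (p:ℂ)) (t := (q:ℂ)) (by simpa using hp) (by simpa using hq)
    rw [show ((p:ℂ) + q) = ((p+q : ℝ) : ℂ) by push_cast; ring] at h1
    rw [Complex.Gamma_ofReal, Complex.Gamma_ofReal, Complex.Gamma_ofReal] at h1
    have hne : ((Real.Gamma (p+q) : ℝ) : ℂ) ≠ 0 := by
      exact_mod_cast (Real.Gamma_pos_of_pos (by linarith : (0:ℝ) < p + q)).ne'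
    rw [eq_comm, mul_comm ((Real.Gamma (p+q) : ℝ) : ℂ)] at h1
    rw [(eq_div_iff hne).mpr h1]; push_cast; ring
  have h2 := Complex.betaIntegral_scaled (p:ℂ) (q:ℂ) ht
  have h3 : (∫ x in (0:ℝ)..t, (x:ℂ) ^ ((p:ℂ) - 1) * ((t:ℂ) - x) ^ ((q:ℂ) - 1))
      = ((∫ u in (0:ℝ)..t, u ^ (p-1) * (t - u) ^ (q-1) : ℝ) : ℂ) := by
    rw [← intervalIntegral.integral_ofReal]
    refine intervalIntegral.integral_congr fun x hx => ?_
    rw [Set.uIcc_of_le ht.le] at hx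
    rw [show ((p:ℂ) - 1) = ((p-1 : ℝ) : ℂ) by push_cast; ring,
      show ((q:ℂ) - 1) = ((q-1 : ℝ) : ℂ) by push_cast; ring,
      show ((t:ℂ) - x) = ((t - x : ℝ) : ℂ) by push_cast; ring,
      ← Complex.ofReal_cpow hx.1, ← Complex.ofReal_cpow (by linarith [hx.2])]
    push_cast; ring
  rw [h3, hB] at h2
  have h4 : ((t:ℂ)) ^ ((p:ℂ) + q - 1) = ((t ^ (p+q-1) : ℝ) : ℂ) := by
    rw [show ((p:ℂ) + q - 1) = ((p+q-1 : ℝ) : ℂ) by push_cast; ring,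
      ← Complex.ofReal_cpow ht.le]
  rw [h4, ← Complex.ofReal_mul] at h2
  exact_mod_cast h2

lemma aux_half {p q t : ℝ} (hp : 0 < p) (hq : 0 < q) (ht : 0 < t) :
    IntervalIntegrable (fun u => u ^ (p-1) * (t-u) ^ (q-1)) volume 0 (t/2) := by
  refine (intervalIntegral.intervalIntegrable_rpow' (by linarith)).mul_continuousOn ?_
  refine ContinuousOn.rpow_const ?_ fun x hx => ?_
  · exact (continuousOn_const.sub continuousOn_id)
  · left
    rw [Set.uIcc_of_le (by linarith : (0:ℝ) ≤ t/2)] at hx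
    have := hx.2; intro h; simp only [sub_eq_zero] at h; linarith [hx.2]

lemma beta_integrable {p q t : ℝ} (hp : 0 < p) (hq : 0 < q) (ht : 0 < t) :
    IntervalIntegrable (fun u => u ^ (p-1) * (t-u) ^ (q-1)) volume 0 t := by
  apply IntervalIntegrable.trans (b := t/2)
  · exact aux_half hp hq ht
  · have h := (aux_half hq hp ht).comp_sub_left t
    have h2 : IntervalIntegrable (fun x => (t-x) ^ (q-1) * (t-(t-x)) ^ (p-1))
        volume (t - t/2) (t - 0) := h.symm
    simp only [sub_sub_cancel, sub_zero] at h2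
    have : (fun x : ℝ => (t-x) ^ (q-1) * x ^ (p-1))
        = fun u : ℝ => u ^ (p-1) * (t-u) ^ (q-1) := by funext x; ring
    rw [this] at h2
    have he : t - t/2 = t/2 := by ring
    rwa [he] at h2

lemma choose_le_two_pow' (n k : ℕ) : n.choose k ≤ 2 ^ n := by
  rcases le_or_gt k n with h | h
  · calc n.choose k ≤ ∑ m ∈ Finset.range (n+1), n.choose m :=
        Finset.single_le_sum (fun i _ => Nat.zero_le _) (Finset.mem_range.mpr (by omega))
      _ = 2 ^ n := Nat.sum_range_choose n
  · rw [Nat.choose_eq_zero_of_lt h]; exact Nat.zero_le _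

lemma poch_le {δ : ℝ} (hδ : 0 < δ) (τ : ℕ) :
    (ascPochhammer ℝ τ).eval δ ≤ 2 ^ (⌈δ⌉₊) * 2 ^ τ * (τ.factorial : ℝ) := by
  set m := ⌈δ⌉₊ with hm
  have hδm : δ ≤ (m : ℝ) := Nat.le_ceil δ
  have h1 : (ascPochhammer ℝ τ).eval δ ≤ (ascPochhammer ℝ τ).eval (m : ℝ) := by
    induction τ with
    | zero => simp
    | succ n ih =>
      rw [ascPochhammer_succ_eval, ascPochhammer_succ_eval]
      have hpos : 0 < (ascPochhammer ℝ n).eval δ := ascPochhammer_pos n δ hδ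
      have h2 : (0:ℝ) ≤ δ + n := by positivity
      have hm0 : (0:ℝ) < (m:ℝ) := by exact_mod_cast Nat.ceil_pos.mpr hδ
      exact mul_le_mul ih (by linarith) h2 (ascPochhammer_pos n _ hm0).le
  have h2 : (ascPochhammer ℝ τ).eval (m : ℝ) = (m.ascFactorial τ : ℝ) := by
    rw [← ascPochhammer_eval_cast, ascPochhammer_nat_eq_ascFactorial]
  have h3 : m.ascFactorial τ ≤ 2 ^ m * 2 ^ τ * τ.factorial := by
    rw [Nat.ascFactorial_eq_factorial_mul_choose']
    calc τ.factorial * (m + τ - 1).choose τ ≤ τ.factorial * 2 ^ (m + τ - 1) :=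
        Nat.mul_le_mul_left _ (choose_le_two_pow' _ _)
      _ ≤ τ.factorial * (2 ^ m * 2 ^ τ) := by
        refine Nat.mul_le_mul_left _ ?_
        rw [← pow_add]; exact Nat.pow_le_pow_right (by norm_num) (by omega)
      _ = 2 ^ m * 2 ^ τ * τ.factorial := by ring
  calc (ascPochhammer ℝ τ).eval δ ≤ (m.ascFactorial τ : ℝ) := by rw [← h2]; exact h1
    _ ≤ ((2 ^ m * 2 ^ τ * τ.factorial : ℕ) : ℝ) := by exact_mod_cast h3
    _ = 2 ^ m * 2 ^ τ * (τ.factorial : ℝ) := by push_cast; ring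

lemma fact_le_gamma {s : ℝ} (hs : 2 ≤ s) : ((⌊s⌋₊ - 1).factorial : ℝ) ≤ Real.Gamma s := by
  have h2 : 2 ≤ ⌊s⌋₊ := Nat.le_floor (by exact_mod_cast hs)
  have hle : (⌊s⌋₊ : ℝ) ≤ s := Nat.floor_le (by linarith)
  have hΓ : Real.Gamma (⌊s⌋₊ : ℝ) = ((⌊s⌋₊ - 1).factorial : ℝ) := by
    have : ((⌊s⌋₊ : ℝ)) = ((⌊s⌋₊ - 1 : ℕ) : ℝ) + 1 := by
      have : 1 ≤ ⌊s⌋₊ := by omega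
      push_cast [Nat.cast_sub this]; ring
    rw [this, Real.Gamma_nat_eq_factorial]
  rw [← hΓ]
  exact Real.Gamma_strictMonoOn_Ici.monotoneOn (Set.mem_Ici.mpr (by exact_mod_cast h2))
    (Set.mem_Ici.mpr hs) hle

lemma pow_le_gamma_eventually {b g : ℝ} (hb : 0 < b) (hg : 0 < g) {K : ℝ} (hK : 1 ≤ K) :
    ∀ᶠ τ : ℕ in atTop, K ^ τ ≤ Real.Gamma (b * τ + g) := by
  set N : ℕ := ⌈2/b⌉₊ + 1 with hN
  have hNb : 2 ≤ b * N := by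
    have h1 : 2/b ≤ (N : ℝ) := le_trans (Nat.le_ceil _) (by rw [hN]; push_cast; linarith)
    calc (2:ℝ) = b * (2/b) := by field_simp
      _ ≤ b * N := by exact mul_le_mul_of_nonneg_left h1 hb.le
  -- factorial domination
  have hfac : ∀ᶠ n : ℕ in atTop, (K ^ N) ^ n ≤ (n.factorial : ℝ) := by
    have ht := FloorSemiring.tendsto_pow_div_factorial_atTop (K ^ N : ℝ)
    filter_upwards [ht.eventually (eventually_le_nhds (by norm_num : (0:ℝ) < 1)),
      eventually_ge_atTop 0] with n hn _
    have hfp : (0:ℝ) < n.factorial := by exact_mod_cast n.factorial_pos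
    rw [div_le_iff₀ hfp, one_mul] at hn
    exact hn
  obtain ⟨M, hM⟩ := hfac.exists_forall_of_atTop
  have htend : Tendsto (fun τ : ℕ => b * τ + g) atTop atTop := by
    apply Filter.tendsto_atTop_add_const_right
    exact (tendsto_natCast_atTop_atTop).const_mul_atTop hb
  filter_upwards [htend.eventually_ge_atTop ((M : ℝ) + 4), eventually_ge_atTop (2 * N)]
    with τ hτ1 hτ2
  set s := b * τ + g with hs
  have hs2 : 2 ≤ s := by have : (0:ℝ) ≤ M := Nat.cast_nonneg M; linarith
  set n := ⌊s⌋₊ - 1 with hn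
  have hfl2 : 2 ≤ ⌊s⌋₊ := Nat.le_floor (by exact_mod_cast hs2)
  have hcast : (n : ℝ) = (⌊s⌋₊ : ℝ) - 1 := by
    have : 1 ≤ ⌊s⌋₊ := by omega
    rw [hn]; push_cast [Nat.cast_sub this]; ring
  have hns : s - 2 ≤ (n : ℝ) := by
    have := Nat.lt_floor_add_one s
    have h2 := Nat.sub_one_lt_floor s
    rw [hcast]
    have : s - 1 ≤ (⌊s⌋₊ : ℝ) := by
      have := Nat.lt_floor_add_one s; linarith [Nat.sub_one_lt_floor s]
    linarith
  have hnM : M ≤ n := by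
    have : (M : ℝ) ≤ (n : ℝ) := by linarith
    exact_mod_cast this
  have hτNn : τ ≤ N * n := by
    have h1 : (τ : ℝ) ≤ (N : ℝ) * n := by
      have hNr : (0:ℝ) < N := by positivity
      have h2 : b * τ - 2 ≤ (n:ℝ) := by linarith
      have h3 : (N:ℝ) * (b * τ - 2) ≤ (N:ℝ) * n :=
        mul_le_mul_of_nonneg_left h2 hNr.le
      have h4 : (2*N : ℝ) ≤ (τ:ℝ) := by exact_mod_cast hτ2
      nlinarith
    exact_mod_cast h1
  calc K ^ τ ≤ K ^ (N * n) := pow_le_pow_right₀ hK hτNn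
    _ = (K ^ N) ^ n := by rw [pow_mul]
    _ ≤ (n.factorial : ℝ) := hM n hnM
    _ ≤ Real.Gamma s := fact_le_gamma hs2

lemma prabhakar_summable {b g δ : ℝ} (hb : 0 < b) (hg : 0 < g) (hδ : 0 < δ) (x : ℝ) :
    Summable (fun τ : ℕ => (ascPochhammer ℝ τ).eval δ * x ^ τ /
      (Real.Gamma (b * τ + g) * (τ.factorial : ℝ))) := by
  set C : ℝ := 2 ^ (⌈δ⌉₊) with hC
  have hC0 : 0 < C := by positivity
  refine Summable.of_norm_bounded_eventually_nat (g := fun τ => C * (1/2 : ℝ) ^ τ)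
    ((summable_geometric_of_lt_one (by norm_num) (by norm_num)).mul_left C) ?_
  have hK : (1:ℝ) ≤ 4 * |x| + 2 := by linarith [abs_nonneg x]
  filter_upwards [pow_le_gamma_eventually hb hg hK] with τ hΓ
  have hΓ0 : 0 < Real.Gamma (b * τ + g) := Real.Gamma_pos_of_pos (by positivity)
  have hf0 : (0:ℝ) < (τ.factorial : ℝ) := by exact_mod_cast τ.factorial_pos
  have hev : 0 < (ascPochhammer ℝ τ).eval δ := ascPochhammer_pos τ δ hδ
  rw [Real.norm_eq_abs, abs_div, abs_mul, abs_pow, abs_of_pos hev,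
    abs_of_pos (by positivity : (0:ℝ) < Real.Gamma (b * τ + g) * τ.factorial)]
  rw [div_le_iff₀ (by positivity)]
  have hKpos : (0:ℝ) < 4 * |x| + 2 := by positivity
  have hKτ : (0:ℝ) < (4 * |x| + 2) ^ τ := by positivity
  calc (ascPochhammer ℝ τ).eval δ * |x| ^ τ
      ≤ (C * 2 ^ τ * τ.factorial) * |x| ^ τ := by
        exact mul_le_mul_of_nonneg_right (poch_le hδ τ) (by positivity)
    _ = (C * (1/2) ^ τ) * ((4 * |x|) ^ τ * τ.factorial) := by
        have h4 : ((4:ℝ) * |x|) ^ τ = 4 ^ τ * |x| ^ τ := mul_pow _ _ _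
        have h24 : ((1:ℝ)/2) ^ τ * 4 ^ τ = 2 ^ τ := by
          rw [← mul_pow]; norm_num
        rw [h4]
        calc C * 2 ^ τ * ↑τ.factorial * |x| ^ τ
            = C * ((1/2:ℝ) ^ τ * 4 ^ τ) * ↑τ.factorial * |x| ^ τ := by rw [h24]
          _ = C * (1/2) ^ τ * (4 ^ τ * |x| ^ τ * ↑τ.factorial) := by ring
    _ ≤ (C * (1/2) ^ τ) * ((4 * |x| + 2) ^ τ * τ.factorial) := by
        refine mul_le_mul_of_nonneg_left (mul_le_mul_of_nonneg_right
          (pow_le_pow_left₀ (by positivity) (by linarith) τ) hf0.le) (by positivity)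
    _ ≤ (C * (1/2) ^ τ) * (Real.Gamma (b * τ + g) * τ.factorial) := by
        refine mul_le_mul_of_nonneg_left (mul_le_mul_of_nonneg_right hΓ hf0.le) (by positivity)

theorem rl_integral_of_prabhakar (β γ δ μ : ℝ) (hβ : 0 < β) (hγ : 0 < γ) (hδ : 0 < δ)
    (hμ : 0 < μ) (a : ℝ) :
    ∀ t : ℝ, 0 < t →
      rlInt μ (fun u => u ^ (γ - 1) * prabhakar β γ δ (a * u ^ β)) t
        = t ^ (γ + μ - 1) * prabhakar β (γ + μ) δ (a * t ^ β) := by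
  intro t ht
  have hΓμ : 0 < Real.Gamma μ := Real.Gamma_pos_of_pos hμ
  -- coefficient and summand family
  set F : ℕ → ℝ → ℝ := fun τ u =>
    ((ascPochhammer ℝ τ).eval δ * a ^ τ / (Real.Gamma (β * τ + γ) * (τ.factorial : ℝ))) *
      (u ^ (β * τ + γ - 1) * (t - u) ^ (μ - 1)) with hF
  have hp : ∀ τ : ℕ, (0:ℝ) < β * τ + γ := fun τ => by positivity
  -- pointwise identity on Ioc 0 t
  have hpt : ∀ u ∈ Set.Ioc (0:ℝ) t,
      (t - u) ^ (μ - 1) * (u ^ (γ - 1) * prabhakar β γ δ (a * u ^ β)) = ∑' τ, F τ u := by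
    intro u hu
    have hu0 : 0 < u := hu.1
    rw [prabhakar]
    rw [show (t - u) ^ (μ - 1) * (u ^ (γ - 1) * (∑' τ : ℕ, (ascPochhammer ℝ τ).eval δ *
          (a * u ^ β) ^ τ / (Real.Gamma (β * τ + γ) * (τ.factorial : ℝ))))
        = ((t - u) ^ (μ - 1) * u ^ (γ - 1)) * (∑' τ : ℕ, (ascPochhammer ℝ τ).eval δ *
          (a * u ^ β) ^ τ / (Real.Gamma (β * τ + γ) * (τ.factorial : ℝ))) by ring]
    rw [← tsum_mul_left]
    refine tsum_congr fun τ => ?_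
    have h1 : (a * u ^ β) ^ τ = a ^ τ * u ^ (β * (τ:ℝ)) := by
      rw [mul_pow, ← Real.rpow_natCast (u ^ β) τ, ← Real.rpow_mul hu0.le]
    have h2 : u ^ (γ - 1) * u ^ (β * (τ:ℝ)) = u ^ (β * τ + γ - 1) := by
      rw [← Real.rpow_add hu0]; ring_nf
    rw [hF]
    simp only []
    rw [h1]
    field_simp
    rw [← h2]
    ring
  -- integrability of each term
  have hint : ∀ τ : ℕ, IntegrableOn (F τ) (Set.Ioc 0 t) volume := by
    intro τ
    have := (beta_integrable (hp τ) hμ ht).const_mul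
      ((ascPochhammer ℝ τ).eval δ * a ^ τ / (Real.Gamma (β * τ + γ) * (τ.factorial : ℝ)))
    rw [intervalIntegrable_iff_integrableOn_Ioc_of_le ht.le] at this
    exact this
  -- value of each term integral
  have hval : ∀ τ : ℕ, ∫ u in Set.Ioc (0:ℝ) t, u ^ (β * τ + γ - 1) * (t - u) ^ (μ - 1)
      = t ^ (β * τ + γ + μ - 1) *
        (Real.Gamma (β * τ + γ) * Real.Gamma μ / Real.Gamma (β * τ + γ + μ)) := by
    intro τ
    rw [← intervalIntegral.integral_of_le ht.le]
    have := beta_real (hp τ) hμ ht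
    rw [this]
  -- norm integrals summable
  have hnorm : ∀ τ : ℕ, ∫ u in Set.Ioc (0:ℝ) t, ‖F τ u‖
      = |(ascPochhammer ℝ τ).eval δ * a ^ τ / (Real.Gamma (β * τ + γ) * (τ.factorial : ℝ))| *
        (t ^ (β * τ + γ + μ - 1) *
          (Real.Gamma (β * τ + γ) * Real.Gamma μ / Real.Gamma (β * τ + γ + μ))) := by
    intro τ
    rw [← hval τ, ← integral_const_mul]
    refine setIntegral_congr_fun measurableSet_Ioc fun u hu => ?_
    have hu0 : 0 < u := hu.1
    have hut : 0 ≤ t - u := by linarith [hu.2]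
    rw [hF]
    simp only [norm_mul, Real.norm_eq_abs]
    rw [abs_of_nonneg (Real.rpow_nonneg hu0.le _), abs_of_nonneg (Real.rpow_nonneg hut _)]
  have hsum : Summable (fun τ : ℕ => ∫ u in Set.Ioc (0:ℝ) t, ‖F τ u‖) := by
    have hs := (prabhakar_summable hβ (by linarith : (0:ℝ) < γ + μ) hδ (|a| * t ^ β)).mul_left
      (t ^ (γ + μ - 1) * Real.Gamma μ)
    refine hs.congr fun τ => ?_
    rw [hnorm τ]
    have hΓp : 0 < Real.Gamma (β * τ + γ) := Real.Gamma_pos_of_pos (hp τ)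
    have hΓpμ : 0 < Real.Gamma (β * τ + γ + μ) := Real.Gamma_pos_of_pos (by positivity)
    have hfp : (0:ℝ) < (τ.factorial : ℝ) := by exact_mod_cast τ.factorial_pos
    have hev : 0 < (ascPochhammer ℝ τ).eval δ := ascPochhammer_pos τ δ hδ
    have habs : |(ascPochhammer ℝ τ).eval δ * a ^ τ /
        (Real.Gamma (β * τ + γ) * (τ.factorial : ℝ))|
        = (ascPochhammer ℝ τ).eval δ * |a| ^ τ /
          (Real.Gamma (β * τ + γ) * (τ.factorial : ℝ)) := by
      rw [abs_div, abs_mul, abs_mul, abs_pow, abs_of_pos hev, abs_of_pos hΓp,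
        abs_of_pos hfp]
    rw [habs]
    have ht1 : t ^ (β * τ + γ + μ - 1) = t ^ (β * (τ:ℝ)) * t ^ (γ + μ - 1) := by
      rw [← Real.rpow_add ht]; ring_nf
    have ht2 : (|a| * t ^ β) ^ τ = |a| ^ τ * t ^ (β * (τ:ℝ)) := by
      rw [mul_pow, ← Real.rpow_natCast (t ^ β) τ, ← Real.rpow_mul ht.le]
    rw [ht1, ht2]
    field_simp
    ring
  -- swap sum and integral
  have hswap : ∫ u in Set.Ioc (0:ℝ) t, (∑' τ, F τ u)
      = ∑' τ, ∫ u in Set.Ioc (0:ℝ) t, F τ u :=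
    (MeasureTheory.integral_tsum_of_summable_integral_norm hint hsum).symm
  -- compute
  rw [rlInt, intervalIntegral.integral_of_le ht.le]
  rw [setIntegral_congr_fun measurableSet_Ioc hpt, hswap]
  have hterm : ∀ τ : ℕ, ∫ u in Set.Ioc (0:ℝ) t, F τ u
      = (Real.Gamma μ * t ^ (γ + μ - 1)) *
        ((ascPochhammer ℝ τ).eval δ * (a * t ^ β) ^ τ /
          (Real.Gamma (β * τ + (γ + μ)) * (τ.factorial : ℝ))) := by
    intro τ
    rw [hF]
    simp only []
    rw [integral_const_mul, hval τ]
    have hΓp : 0 < Real.Gamma (β * τ + γ) := Real.Gamma_pos_of_pos (hp τ)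
    have hΓpμ : 0 < Real.Gamma (β * τ + γ + μ) := Real.Gamma_pos_of_pos (by positivity)
    have hfp : (0:ℝ) < (τ.factorial : ℝ) := by exact_mod_cast τ.factorial_pos
    have ht1 : t ^ (β * τ + γ + μ - 1) = t ^ (β * (τ:ℝ)) * t ^ (γ + μ - 1) := by
      rw [← Real.rpow_add ht]; ring_nf
    have ht2 : (a * t ^ β) ^ τ = a ^ τ * t ^ (β * (τ:ℝ)) := by
      rw [mul_pow, ← Real.rpow_natCast (t ^ β) τ, ← Real.rpow_mul ht.le]
    have harg : β * (τ:ℝ) + (γ + μ) = β * τ + γ + μ := by ring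
    rw [harg, ht1, ht2]
    field_simp
  rw [tsum_congr hterm, tsum_mul_left, prabhakar]
  field_simp
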